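/- Let u be a linear unitary representation of a finite abelian group G on a finite-dimensional Hilbert space, and ω a maximally non-commutative factor system of G. For each simultaneous eigenvector |i⟩ of u with character χ_i (i.e., u(g)|i⟩ = χ_i(g)|i⟩), there exists g_i ∈ G such that χ_i(g) V(g) = V(g_i) V(g) V(g_i)† for all g ∈ G and for any projective representation V with factor system ω. -/

import Mathlib

open Matrix

/-- Lemma 3 of the paper: let `u` be a linear unitary representation of a finite
abelian group `G` on a finite-dimensional Hilbert space and `ω` a maximally
non-commutative factor system of `G`.  For each simultaneous eigenvector `v` of `u`
with character `χ` (i.e. `u(g) v = χ(g) v`), there exists `g_i ∈ G` such that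
`χ(g) V(g) = V(g_i) V(g) V(g_i)†` for all `g ∈ G` and every projective unitary
representation `V` with factor system `ω`. -/
theorem character_conjugation_lemma
    {G : Type*} [CommGroup G] [Fintype G] {d : ℕ}
    (ω : G → G → ℂ)
    (hcocycle : ∀ g h k, ω g h * ω (g * h) k = ω h k * ω g (h * k))
    (hω : ∀ g h, ‖ω g h‖ = 1)
    (hmnc : ∀ g, (∀ h, ω g h = ω h g) → g = 1)
    (u : G → Matrix (Fin d) (Fin d) ℂ)
    (huunit : ∀ g, u g ∈ Matrix.unitaryGroup (Fin d) ℂ)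
    (huhom : ∀ g h, u g * u h = u (g * h)) (huone : u 1 = 1)
    (v : Fin d → ℂ) (hv : v ≠ 0) (χ : G → ℂ)
    (heig : ∀ g, (u g).mulVec v = χ g • v) :
    ∃ gi : G, ∀ (n : ℕ) (V : G → Matrix (Fin n) (Fin n) ℂ),
      (∀ g, V g ∈ Matrix.unitaryGroup (Fin n) ℂ) →
      (∀ g h, V g * V h = ω g h • V (g * h)) →
      ∀ g, χ g • V g = V gi * V g * (V gi)ᴴ := by
  classical
  -- ω values are nonzero
  have hne : ∀ g h, ω g h ≠ 0 := fun g h h0 => by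
    have := hω g h; rw [h0] at this; simp at this
  -- cancellation of scalars acting on v
  have hsc : ∀ a b : ℂ, a • v = b • v → a = b := fun a b hab =>
    smul_left_injective ℂ hv hab
  -- χ is multiplicative
  have hχmul : ∀ g h, χ (g * h) = χ g * χ h := by
    intro g h
    apply hsc
    rw [← heig (g * h), ← huhom, ← Matrix.mulVec_mulVec, heig h, Matrix.mulVec_smul,
      heig g, smul_smul, mul_comm (χ h)]
  have hχone : χ 1 = 1 := by
    apply hsc
    rw [← heig 1, huone, Matrix.one_mulVec, one_smul]
  have hχne : ∀ g, χ g ≠ 0 := by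
    intro g
    have : χ g * χ g⁻¹ = 1 := by rw [← hχmul, mul_inv_cancel, hχone]
    exact left_ne_zero_of_mul_eq_one this
  -- β g h = ω g h / ω h g
  set β : G → G → ℂ := fun g h => ω g h / ω h g with hβ
  have hβne : ∀ g h, β g h ≠ 0 := fun g h => div_ne_zero (hne g h) (hne h g)
  have hβswap : ∀ g h, β g h * β h g = 1 := fun g h => by
    rw [hβ]
    simp only
    rw [div_mul_div_comm, mul_comm (ω g h), div_self (mul_ne_zero (hne h g) (hne g h))]
  -- ω g 1 = ω 1 1 and ω 1 h = ω 1 1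
  have hω1r : ∀ g, ω g 1 = ω 1 1 := by
    intro g
    have := hcocycle g 1 1
    rw [mul_one, mul_one] at this
    exact mul_right_cancel₀ (hne g 1) this
  have hω1l : ∀ h, ω 1 h = ω 1 1 := by
    intro h
    have := hcocycle 1 1 h
    rw [one_mul, one_mul, mul_comm (ω 1 1)] at this
    exact (mul_left_cancel₀ (hne 1 h) this.symm)
  have hβone2 : ∀ g, β g 1 = 1 := fun g => by
    rw [hβ]; simp only; rw [hω1r g, hω1l g, div_self (hne 1 1)]
  have hβone1 : ∀ h, β 1 h = 1 := fun h => by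
    rw [hβ]; simp only; rw [hω1r h, hω1l h, div_self (hne 1 1)]
  -- β is multiplicative in the second argument
  have hβmul2 : ∀ g h k, β g (h * k) = β g h * β g k := by
    intro g h k
    have A := hcocycle g h k
    have B := hcocycle h g k
    rw [mul_comm h g] at B
    have C := hcocycle h k g
    rw [mul_comm k g] at C
    rw [hβ]; simp only
    rw [div_mul_div_comm, div_eq_div_iff (hne (h*k) g) (mul_ne_zero (hne h g) (hne k g))]
    apply mul_left_cancel₀ (hne h k)
    ring_nf
    ring_nf at A B C
    linear_combination (-(ω h g * ω k g)) * A + (ω g h * ω k g) * B - (ω g h * ω g k) * C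
  have hβinv : ∀ g h, β g h = (β h g)⁻¹ := fun g h =>
    eq_inv_of_mul_eq_one_left ((mul_comm (β g h) (β h g)) ▸ hβswap g h)
  -- β is multiplicative in the first argument
  have hβmul1 : ∀ g g' h, β (g * g') h = β g h * β g' h := by
    intro g g' h
    rw [hβinv (g * g') h, hβmul2, mul_inv, ← hβinv, ← hβinv]
  -- package β as a monoid hom `G →* (G →* ℂˣ)`
  let Fh : G → (G →* ℂˣ) := fun g =>
    { toFun := fun h => Units.mk0 (β g h) (hβne g h)
      map_one' := Units.ext (by simpa using hβone2 g)
      map_mul' := fun h k => Units.ext (by simpa using hβmul2 g h k) }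
  let F : G →* (G →* ℂˣ) :=
    { toFun := Fh
      map_one' := MonoidHom.ext fun h => Units.ext (by simpa [Fh] using hβone1 h)
      map_mul' := fun g g' =>
        MonoidHom.ext fun h => Units.ext (by simpa [Fh] using hβmul1 g g' h) }
  have hFinj : Function.Injective F := by
    rw [injective_iff_map_eq_one]
    intro g hg
    apply hmnc
    intro h
    have h1 : β g h = 1 := congrArg Units.val (DFunLike.congr_fun hg h)
    rw [hβ] at h1
    simp only at h1
    rw [div_eq_one_iff_eq (hne h g)] at h1
    exact h1
  -- χ as a monoid hom
  let χu : G →* ℂˣ :=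
    { toFun := fun g => Units.mk0 (χ g) (hχne g)
      map_one' := Units.ext (by simpa using hχone)
      map_mul' := fun g h => Units.ext (by simpa using hχmul g h) }
  -- duality : |G| = |Ĝ|, so the injective map F is surjective
  haveI : NeZero ((Monoid.exponent G : ℂ)) :=
    ⟨Nat.cast_ne_zero.mpr Monoid.exponent_ne_zero_of_finite⟩
  obtain ⟨e⟩ := CommGroup.monoidHom_mulEquiv_of_hasEnoughRootsOfUnity G ℂ
  have hsurj : Function.Surjective (fun g => e (F g)) :=
    Finite.surjective_of_injective (e.injective.comp hFinj)
  obtain ⟨gi, hgi0⟩ := hsurj (e χu)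
  have hFgi : F gi = χu := e.injective hgi0
  have hkey : ∀ h, β gi h = χ h := fun h =>
    congrArg Units.val (DFunLike.congr_fun hFgi h)
  -- conclusion
  refine ⟨gi, ?_⟩
  intro n V hVunit hVmul g
  have hVgi : V gi * (V gi)ᴴ = 1 := by
    have := Matrix.mem_unitaryGroup_iff.mp (hVunit gi)
    rwa [Matrix.star_eq_conjTranspose] at this
  have hkeyg : ω gi g = χ g * ω g gi := by
    have h1 := hkey g
    rw [hβ] at h1
    simp only at h1
    rw [div_eq_iff (hne g gi)] at h1
    exact h1
  have hswap : V gi * V g = χ g • (V g * V gi) := by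
    rw [hVmul gi g, hVmul g gi, mul_comm g gi, hkeyg, mul_smul]
  rw [hswap, smul_mul_assoc, mul_assoc, hVgi, mul_one]
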